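/- arXiv:2604.02673 — 2 statements merged into one kernel-verified Lean document; each statement's English description precedes it below -/
import Mathlib

section
/- In SSL, for distinct agents a, b, both S_aφ → K_a¬K_bφ and S_aφ → K_a¬K_b¬φ are derivable. -/
/-- Formulas of the epistemic-secrecy language: atoms, ⊤, ¬, ∧, K_a, S_a
(→, ↔, ⊥ are defined by abbreviation). -/
inductive Form (A P : Type) : Type where
  | atom : P → Form A P
  | top : Form A P
  | neg : Form A P → Form A P
  | and : Form A P → Form A P → Form A P
  | K : A → Form A P → Form A P
  | S : A → Form A P → Form A P

namespace Form
variable {A P : Type}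
/-- Material implication, defined from ¬ and ∧. -/
def imp (φ ψ : Form A P) : Form A P := neg (and φ (neg ψ))
/-- Biconditional. -/
def iff (φ ψ : Form A P) : Form A P := and (imp φ ψ) (imp ψ φ)
/-- Falsum. -/
def bot : Form A P := neg top
end Form

/-- A boolean interpretation of formulas: any assignment of truth values to formulas
that respects ⊤, ¬ and ∧ (treating atoms and modal formulas as atomic). -/
def PropEval {A P : Type} (g : Form A P → Prop) : Prop :=
  g Form.top ∧ (∀ φ : Form A P, g (Form.neg φ) ↔ ¬ g φ) ∧
    (∀ φ ψ : Form A P, g (Form.and φ ψ) ↔ (g φ ∧ g ψ))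

/-- The Hilbert system SSL: all instances of propositional tautologies, the S5 axioms
(K), (T), (4), (5) for each K_a, the secrecy axioms (S1) S_aφ → K_aφ,
(S2) S_aφ → ¬K_bφ for b ≠ a, (S4) S_aφ → K_aS_aφ, with rules modus ponens,
knowledge necessitation, and replacement of provable equivalents under S_a. -/
inductive Prov {A P : Type} : Form A P → Prop
  | taut (φ : Form A P) :
      (∀ g : Form A P → Prop, PropEval g → g φ) → Prov φ
  | axK (a : A) (φ ψ : Form A P) :
      Prov ((Form.K a (φ.imp ψ)).imp ((Form.K a φ).imp (Form.K a ψ)))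
  | axT (a : A) (φ : Form A P) : Prov ((Form.K a φ).imp φ)
  | ax4 (a : A) (φ : Form A P) : Prov ((Form.K a φ).imp (Form.K a (Form.K a φ)))
  | ax5 (a : A) (φ : Form A P) :
      Prov ((Form.neg (Form.K a φ)).imp (Form.K a (Form.neg (Form.K a φ))))
  | axS1 (a : A) (φ : Form A P) : Prov ((Form.S a φ).imp (Form.K a φ))
  | axS2 {a b : A} (φ : Form A P) :
      b ≠ a → Prov ((Form.S a φ).imp (Form.neg (Form.K b φ)))
  | axS4 (a : A) (φ : Form A P) : Prov ((Form.S a φ).imp (Form.K a (Form.S a φ)))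
  | mp {φ ψ : Form A P} : Prov (φ.imp ψ) → Prov φ → Prov ψ
  | nec (a : A) {φ : Form A P} : Prov φ → Prov (Form.K a φ)
  | re (a : A) {φ ψ : Form A P} :
      Prov (φ.iff ψ) → Prov ((Form.S a φ).iff (Form.S a ψ))

private lemma provImpTrans {A P : Type} {φ ψ χ : Form A P}
    (h1 : Prov (φ.imp ψ)) (h2 : Prov (ψ.imp χ)) : Prov (φ.imp χ) := by
  refine Prov.mp (Prov.mp (Prov.taut ((φ.imp ψ).imp ((ψ.imp χ).imp (φ.imp χ))) ?_) h1) h2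
  rintro g ⟨ht, hn, ha⟩
  simp only [Form.imp, hn, ha]
  tauto

/-- In SSL, for distinct agents `a, b`, both `S_a φ → K_a ¬K_b φ` and
`S_a φ → K_a ¬K_b ¬φ` are derivable. -/
theorem ssl_owner_knows_ignorance {A P : Type} (a b : A) (hab : a ≠ b) (φ : Form A P) :
    Prov ((Form.S a φ).imp (Form.K a (Form.neg (Form.K b φ)))) ∧
    Prov ((Form.S a φ).imp (Form.K a (Form.neg (Form.K b (Form.neg φ))))) := by
  have lift : ∀ χ : Form A P, Prov ((Form.S a φ).imp χ) →
      Prov ((Form.S a φ).imp (Form.K a χ)) := by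
    intro χ h
    exact provImpTrans (Prov.axS4 a φ)
      (Prov.mp (Prov.axK a (Form.S a φ) χ) (Prov.nec a h))
  constructor
  · exact lift _ (Prov.axS2 φ hab.symm)
  · refine lift _ ?_
    refine Prov.mp (Prov.mp (Prov.mp (Prov.taut
      (((Form.S a φ).imp (Form.K a φ)).imp (((Form.K a φ).imp φ).imp
        (((Form.K b (Form.neg φ)).imp (Form.neg φ)).imp
          ((Form.S a φ).imp (Form.neg (Form.K b (Form.neg φ))))))) ?_)
      (Prov.axS1 a φ)) (Prov.axT a φ)) (Prov.axT b (Form.neg φ))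
    rintro g ⟨ht, hn, ha⟩
    simp only [Form.imp, hn, ha]
    tauto
end

section
/- Local invariance of canonical secrecy formulas: if Γ and Δ are maximally SSL-consistent sets in the same R_a-equivalence class (i.e. Γ R_a Δ and Δ R_a Γ), then for every formula φ, S_aφ ∈ Γ iff S_aφ ∈ Δ. -/
/-- Conjunction of a finite list of formulas (empty conjunction is ⊤). -/
def conj {A P : Type} : List (Form A P) → Form A P
  | [] => Form.top
  | φ :: L => Form.and φ (conj L)

/-- A set of formulas is SSL-consistent if no finite conjunction of its members
provably implies ⊥. -/
def Consistent {A P : Type} (Γ : Set (Form A P)) : Prop :=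
  ∀ L : List (Form A P), (∀ φ ∈ L, φ ∈ Γ) → ¬ Prov ((conj L).imp Form.bot)

/-- A maximally SSL-consistent set: consistent, and containing every formula that can
be consistently added. -/
def MCS {A P : Type} (Γ : Set (Form A P)) : Prop :=
  Consistent Γ ∧ ∀ φ : Form A P, Consistent (insert φ Γ) → φ ∈ Γ

section Helpers
variable {A P : Type}

lemma g_conj {g : Form A P → Prop} (hg : PropEval g) :
    ∀ L : List (Form A P), g (conj L) ↔ ∀ χ ∈ L, g χ := by
  obtain ⟨ht, hn, ha⟩ := hg
  intro L
  induction L with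
  | nil => simpa [conj] using ht
  | cons φ L ih => simp [conj, ha, ih]

lemma g_imp {g : Form A P → Prop} (hg : PropEval g) (φ ψ : Form A P) :
    g (φ.imp ψ) ↔ (g φ → g ψ) := by
  obtain ⟨ht, hn, ha⟩ := hg
  simp only [Form.imp, hn, ha]
  tauto

lemma g_bot {g : Form A P → Prop} (hg : PropEval g) : ¬ g Form.bot := by
  obtain ⟨ht, hn, ha⟩ := hg
  simp only [Form.bot, hn]
  exact fun h => h ht

lemma prov_imp_trans {φ ψ χ : Form A P} (h1 : Prov (φ.imp ψ)) (h2 : Prov (ψ.imp χ)) :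
    Prov (φ.imp χ) := by
  have t : Prov ((φ.imp ψ).imp ((ψ.imp χ).imp (φ.imp χ))) := by
    apply Prov.taut
    intro g hg
    simp only [g_imp hg]
    tauto
  exact Prov.mp (Prov.mp t h1) h2

lemma mcs_closed {Γ : Set (Form A P)} (hΓ : MCS Γ) {φ ψ : Form A P}
    (hφ : φ ∈ Γ) (h : Prov (φ.imp ψ)) : ψ ∈ Γ := by
  classical
  apply hΓ.2
  intro L hL hcontra
  set L' : List (Form A P) := L.map (fun χ => if χ = ψ then φ else χ) with hL'
  have hsub : ∀ χ ∈ L', χ ∈ Γ := by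
    intro χ hχ
    rw [hL', List.mem_map] at hχ
    obtain ⟨μ, hμL, hμ⟩ := hχ
    subst hμ
    by_cases hc : μ = ψ
    · simpa [hc] using hφ
    · rcases hL μ hμL with h' | h'
      · exact absurd h' hc
      · simpa [hc] using h'
  have key : Prov ((conj L').imp (conj L)) := by
    have t : Prov ((φ.imp ψ).imp ((conj L').imp (conj L))) := by
      apply Prov.taut
      intro g hg
      simp only [g_imp hg, g_conj hg]
      intro himp hall χ hχ
      have hmem : (if χ = ψ then φ else χ) ∈ L' := by
        rw [hL', List.mem_map]; exact ⟨χ, hχ, rfl⟩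
      by_cases hc : χ = ψ
      · rw [hc]; exact himp (by simpa [hc] using hall _ hmem)
      · simpa [hc] using hall _ hmem
    exact Prov.mp t h
  exact hΓ.1 L' hsub (prov_imp_trans key hcontra)

end Helpers

/-- Local invariance of canonical secrecy formulas: if MCSs `Γ, Δ` lie in the same
`R_a`-class, then `S_a φ ∈ Γ` iff `S_a φ ∈ Δ`. -/
theorem canonical_secrecy_invariance {A P : Type} (a : A) (φ : Form A P)
    (Γ Δ : Set (Form A P)) (hΓ : MCS Γ) (hΔ : MCS Δ)
    (h1 : ∀ ψ : Form A P, Form.K a ψ ∈ Γ → ψ ∈ Δ)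
    (h2 : ∀ ψ : Form A P, Form.K a ψ ∈ Δ → ψ ∈ Γ) :
    (Form.S a φ ∈ Γ ↔ Form.S a φ ∈ Δ) := by
  constructor
  · intro h
    exact h1 _ (mcs_closed hΓ h (Prov.axS4 a φ))
  · intro h
    exact h2 _ (mcs_closed hΔ h (Prov.axS4 a φ))
end
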